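/- Define the GHZ state ψ ∈ ℂ⁸ (indexed by Bool × Bool × Bool) with ψ(0,0,0) = 1/2, ψ(0,1,1) = ψ(1,0,1) = ψ(1,1,0) = −1/2, and all other entries 0. For inputs (a,b,c) ∈ {0,1}³ with a⊕b⊕c = 0, let U = H^a ⊗ H^b ⊗ H^c where H is the 2×2 Hadamard matrix (1/√2)[[1,1],[1,−1]]. Then every basis amplitude (Uψ)(x,y,z) with x⊕y⊕z ≠ a ∨ b ∨ c equals 0. In particular, measuring Uψ in the computational basis yields outcomes (x,y,z) with x⊕y⊕z = a ∨ b ∨ c with probability 1. -/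
import Mathlib

noncomputable def Had (t : Bool) : Bool → Bool → ℂ := fun x y =>
  if t then (if x && y then -(1 / Real.sqrt 2) else (1 / Real.sqrt 2))
  else (if x = y then 1 else 0)

noncomputable def ghzState : Bool × Bool × Bool → ℂ := fun p =>
  if p = (false, false, false) then 1/2
  else if p = (false, true, true) ∨ p = (true, false, true) ∨ p = (true, true, false)
    then -(1/2) else 0

theorem ghz_quantum_strategy_wins (a b c : Bool) (hvalid : xor a (xor b c) = false)
    (x y z : Bool) (hbad : xor x (xor y z) ≠ (a || b || c)) :
    (∑ x' : Bool, ∑ y' : Bool, ∑ z' : Bool,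
      Had a x x' * Had b y y' * Had c z z' * ghzState (x', y', z')) = 0 := by
  revert hvalid hbad
  rcases a <;> rcases b <;> rcases c <;> rcases x <;> rcases y <;> rcases z <;>
    intro hvalid hbad <;> first
    | exact absurd hvalid (by decide)
    | exact absurd rfl hbad
    | (simp only [Had, ghzState, Fintype.sum_bool, if_true, if_false, Bool.and_self,
        Bool.and_false, Bool.false_and, Bool.and_true, Bool.true_and, cond_true, cond_false,
        Prod.mk.injEq, and_true, and_false, false_and, true_and, and_self, if_pos, if_neg,
        Bool.true_eq_false, Bool.false_eq_true, ite_true, ite_false, or_self, or_false,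
        false_or, reduceIte] <;> ring)
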